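/- Let B and D be linear functionals on V and set T := B − D. Suppose P̄(X,Y,Z,W) = 0 for all X,Y,Z,W ∈ V with a ≠ 0, and suppose S(X,Z) = α̃₁ T(X)T(Z) for all X,Z ∈ V for some scalar α̃₁. Then, with γ₁ = (r/(an))(a/(n−1) + b), δ₁ = −(b/a)α̃₁, and the bilinear form {δ₁BD} := δ₁(B⊗B − B⊗D − D⊗B + D⊗D), one has R̄(X,Y,Z,W) = γ₁[g(Y,Z)g(X,W) − g(X,Z)g(Y,W)] + {δ₁BD}(Y,Z)g(X,W) − {δ₁BD}(X,Z)g(Y,W) for all X,Y,Z,W ∈ V; i.e. R̄ is of pseudo quasi-constant curvature form. -/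

import Mathlib

open scoped RealInnerProductSpace

theorem stmt13
    {V : Type*} [NormedAddCommGroup V] [InnerProductSpace ℝ V]
    (n : ℕ) (hn : 3 < n)
    (e : Module.Basis (Fin n) ℝ V) (he : Orthonormal ℝ e)
    (Rb : V → V → V → V → ℝ)
    (hlin1 : ∀ (c : ℝ) (X X' Y Z W : V),
      Rb (c • X + X') Y Z W = c * Rb X Y Z W + Rb X' Y Z W)
    (hlin2 : ∀ (c : ℝ) (X Y Y' Z W : V),
      Rb X (c • Y + Y') Z W = c * Rb X Y Z W + Rb X Y' Z W)
    (hlin3 : ∀ (c : ℝ) (X Y Z Z' W : V),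
      Rb X Y (c • Z + Z') W = c * Rb X Y Z W + Rb X Y Z' W)
    (hlin4 : ∀ (c : ℝ) (X Y Z W W' : V),
      Rb X Y Z (c • W + W') = c * Rb X Y Z W + Rb X Y Z W')
    (hskew1 : ∀ X Y Z W : V, Rb X Y Z W = - Rb Y X Z W)
    (hskew2 : ∀ X Y Z W : V, Rb X Y Z W = - Rb X Y W Z)
    (hpair : ∀ X Y Z W : V, Rb X Y Z W = Rb Z W X Y)
    (S : V → V → ℝ) (hS : ∀ Y Z : V, S Y Z = ∑ i, Rb (e i) Y Z (e i))
    (r : ℝ) (hr : r = ∑ i, S (e i) (e i))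
    (a b : ℝ)
    (Pb : V → V → V → V → ℝ)
    (hP : ∀ X Y Z W : V, Pb X Y Z W =
      a * Rb X Y Z W
      + b * (S Y Z * ⟪X, W⟫ - S X Z * ⟪Y, W⟫)
      - (r / n) * (a / ((n : ℝ) - 1) + b)
        * (⟪Y, Z⟫ * ⟪X, W⟫ - ⟪X, Z⟫ * ⟪Y, W⟫))
    (ha : a ≠ 0)
    (hflat : ∀ X Y Z W : V, Pb X Y Z W = 0)
    (B D : V →ₗ[ℝ] ℝ) (T : V →ₗ[ℝ] ℝ) (hTdef : T = B - D)
    (αt : ℝ)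
    (hRic : ∀ X Z : V, S X Z = αt * T X * T Z) :
    ∀ X Y Z W : V,
      Rb X Y Z W =
        (r / (a * n)) * (a / ((n : ℝ) - 1) + b)
          * (⟪Y, Z⟫ * ⟪X, W⟫ - ⟪X, Z⟫ * ⟪Y, W⟫)
        + ((-(b / a) * αt)
            * (B Y * B Z - B Y * D Z - D Y * B Z + D Y * D Z)) * ⟪X, W⟫
        - ((-(b / a) * αt)
            * (B X * B Z - B X * D Z - D X * B Z + D X * D Z)) * ⟪Y, W⟫ := by
  intro X Y Z W
  have h := hflat X Y Z W
  rw [hP] at h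
  have h1 := hRic Y Z
  have h2 := hRic X Z
  subst hTdef
  simp only [LinearMap.sub_apply] at h1 h2
  rw [h1, h2] at h
  have hn0 : (n:ℝ) ≠ 0 := by positivity
  have hn1 : (n:ℝ) - 1 ≠ 0 := by
    have : (3:ℝ) < n := by exact_mod_cast hn
    linarith
  have key : Rb X Y Z W =
      (r / ↑n * (a / ((n:ℝ) - 1) + b) * (⟪Y, Z⟫ * ⟪X, W⟫ - ⟪X, Z⟫ * ⟪Y, W⟫)
        - b * (αt * (B Y - D Y) * (B Z - D Z) * ⟪X, W⟫
            - αt * (B X - D X) * (B Z - D Z) * ⟪Y, W⟫)) / a := by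
    rw [eq_div_iff ha]
    linear_combination h
  rw [key]
  field_simp
  ring
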